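/- Let $f : (t_0 - \rho_0, t_0 + \rho_0) \to \mathbb{R}$ be $C^2$ with $f'' \ge \sigma_0 > 0$. Set $\sigma_1 = \min(\sigma_0, 1)$. Let $|v_0 - t_0| < \rho_0/2$ and $0 < \rho \le \rho_0$. Assume $-\sigma_1^2\rho^2/256 < f(v_0) \le 0$ and $f'(v_0) < 0$. Then there exists $v$ with $t_0 - \rho_0 < v_0 - \rho/8 < v \le v_0$ such that $f(v) = 0$. -/

import Mathlib

/-- Part (3) of the elementary calculus lemma: a zero slightly to the left of a point with
small non-positive value and negative derivative. -/
theorem zero_to_the_left (t0 ρ0 σ0 ρ : ℝ) (hρ0 : 0 < ρ0) (hσ0 : 0 < σ0)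
    (f : ℝ → ℝ) (hf : ContDiffOn ℝ 2 f (Set.Ioo (t0 - ρ0) (t0 + ρ0)))
    (hconv : ∀ x ∈ Set.Ioo (t0 - ρ0) (t0 + ρ0), σ0 ≤ deriv (deriv f) x)
    (v0 : ℝ) (hv0 : |v0 - t0| < ρ0 / 2) (hρlo : 0 < ρ) (hρhi : ρ ≤ ρ0)
    (hflo : -((min σ0 1) ^ 2 * ρ ^ 2 / 256) < f v0) (hfhi : f v0 ≤ 0)
    (hder : deriv f v0 < 0) :
    ∃ v : ℝ, t0 - ρ0 < v0 - ρ / 8 ∧ v0 - ρ / 8 < v ∧ v ≤ v0 ∧ f v = 0 := by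
  set σ1 := min σ0 1 with hσ1def
  have hσ1pos : 0 < σ1 := lt_min hσ0 one_pos
  have hσ1le1 : σ1 ≤ 1 := min_le_right _ _
  have hσ1leσ0 : σ1 ≤ σ0 := min_le_left _ _
  set s := Set.Ioo (t0 - ρ0) (t0 + ρ0) with hs
  have hsopen : IsOpen s := isOpen_Ioo
  set h : ℝ := ρ * Real.sqrt σ1 / 8 with hh
  have hsq : Real.sqrt σ1 ^ 2 = σ1 := Real.sq_sqrt hσ1pos.le
  have hsqpos : 0 < Real.sqrt σ1 := Real.sqrt_pos.2 hσ1pos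
  have hsqle1 : Real.sqrt σ1 ≤ 1 := by
    rw [show (1:ℝ) = Real.sqrt 1 by simp]
    exact Real.sqrt_le_sqrt hσ1le1
  have hhpos : 0 < h := by positivity
  have hhle : h ≤ ρ / 8 := by
    rw [hh]
    have := mul_le_of_le_one_right hρlo.le hsqle1
    linarith
  have hv0lo : t0 - ρ0 / 2 < v0 := by
    have := abs_lt.1 hv0; linarith [this.1]
  have hv0hi : v0 < t0 + ρ0 / 2 := by
    have := abs_lt.1 hv0; linarith [this.2]
  have hIccsub : Set.Icc (v0 - h) v0 ⊆ s := by
    intro x hx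
    constructor
    · have := hx.1; linarith
    · have := hx.2; linarith
  -- differentiability facts
  have hfd : DifferentiableOn ℝ f s := hf.differentiableOn (by norm_num)
  have hf' : ContDiffOn ℝ 1 (deriv f) s := hf.deriv_of_isOpen hsopen (by norm_num)
  have hfd' : DifferentiableOn ℝ (deriv f) s := hf'.differentiableOn one_ne_zero
  have hderivAt : ∀ x ∈ s, HasDerivAt f (deriv f x) x := fun x hx =>
    (hfd.differentiableAt (hsopen.mem_nhds hx)).hasDerivAt
  have hderivAt2 : ∀ x ∈ s, HasDerivAt (deriv f) (deriv (deriv f) x) x := fun x hx =>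
    (hfd'.differentiableAt (hsopen.mem_nhds hx)).hasDerivAt
  -- auxiliary functions
  set φ : ℝ → ℝ := fun x => deriv f x - σ0 * (x - v0) with hφdef
  set g : ℝ → ℝ := fun x => f x - σ0 * (x - v0) ^ 2 / 2 with hgdef
  have hgderiv : ∀ x ∈ s, HasDerivAt g (φ x) x := by
    intro x hx
    have h1 : HasDerivAt (fun y : ℝ => σ0 * (y - v0) ^ 2 / 2) (σ0 * (x - v0)) x := by
      have := (((hasDerivAt_id x).sub_const v0).pow 2).const_mul (σ0 / 2)
      convert this using 1
      · rfl
      · rfl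
      · ext y; simp only [Pi.pow_apply, id_eq]; ring
      · simp only [id_eq]; norm_num; ring
    exact (hderivAt x hx).sub h1
  have hφderiv : ∀ x ∈ s, HasDerivAt φ (deriv (deriv f) x - σ0) x := by
    intro x hx
    have h1 : HasDerivAt (fun y : ℝ => σ0 * (y - v0)) σ0 x := by
      have := ((hasDerivAt_id x).sub_const v0).const_mul σ0
      simpa using this
    exact (hderivAt2 x hx).sub h1
  -- φ is monotone on the interval
  have hmono : MonotoneOn φ (Set.Icc (v0 - h) v0) := by
    apply monotoneOn_of_deriv_nonneg (convex_Icc _ _)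
    · exact fun x hx => (hφderiv x (hIccsub hx)).continuousAt.continuousWithinAt
    · intro x hx
      rw [interior_Icc] at hx
      exact ((hφderiv x (hIccsub (Set.Ioo_subset_Icc_self hx))).differentiableAt).differentiableWithinAt
    · intro x hx
      rw [interior_Icc] at hx
      have hxs : x ∈ s := hIccsub (Set.Ioo_subset_Icc_self hx)
      rw [(hφderiv x hxs).deriv]
      linarith [hconv x hxs]
  -- mean value theorem for g on [v0 - h, v0]
  have hablt : v0 - h < v0 := by linarith
  have hgcont : ContinuousOn g (Set.Icc (v0 - h) v0) := fun x hx =>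
    (hgderiv x (hIccsub hx)).continuousAt.continuousWithinAt
  obtain ⟨c, hc, hcslope⟩ := exists_hasDerivAt_eq_slope g φ hablt hgcont
    (fun x hx => hgderiv x (hIccsub (Set.Ioo_subset_Icc_self hx)))
  have hφc : φ c ≤ φ v0 :=
    hmono (Set.Ioo_subset_Icc_self hc) (Set.right_mem_Icc.2 hablt.le) hc.2.le
  have hφv0 : φ v0 = deriv f v0 := by simp [hφdef]
  have hslopeneg : (g v0 - g (v0 - h)) / (v0 - (v0 - h)) < 0 := by
    rw [← hcslope]; rw [hφv0] at hφc; linarith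
  have hgineq : g v0 < g (v0 - h) := by
    by_contra hcon
    push_neg at hcon
    have h1 : (0:ℝ) ≤ g v0 - g (v0 - h) := by linarith
    have h2 : (0:ℝ) ≤ v0 - (v0 - h) := by linarith
    have := div_nonneg h1 h2
    linarith
  have hgv0 : g v0 = f v0 := by simp [hgdef]
  have hgvh : g (v0 - h) = f (v0 - h) - σ0 * h ^ 2 / 2 := by
    have he : (v0 - h - v0) ^ 2 = h ^ 2 := by ring
    simp only [hgdef, he]
  have hh2 : h ^ 2 = ρ ^ 2 * σ1 / 64 := by
    rw [hh, div_pow, mul_pow, hsq]; norm_num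
  have hfvhpos : 0 < f (v0 - h) := by
    rw [hgv0, hgvh] at hgineq
    have : σ1 ^ 2 * ρ ^ 2 / 128 ≤ σ0 * h ^ 2 / 2 := by
      rw [hh2]; nlinarith
    nlinarith
  -- intermediate value theorem
  have hfcont : ContinuousOn f (Set.Icc (v0 - h) v0) := hf.continuousOn.mono hIccsub
  have hmem : (0:ℝ) ∈ Set.Icc (f v0) (f (v0 - h)) := ⟨hfhi, hfvhpos.le⟩
  obtain ⟨v, hvmem, hveq⟩ := intermediate_value_Icc' hablt.le hfcont hmem
  refine ⟨v, by linarith, ?_, hvmem.2, hveq⟩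
  have hvne : v ≠ v0 - h := by
    intro hcontra
    rw [hcontra] at hveq
    linarith [hfvhpos, hveq.ge]
  have : v0 - h < v := lt_of_le_of_ne hvmem.1 (Ne.symm hvne)
  linarith
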